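/- Let ρ̄ > 0 and let h : [0,ρ̄] → ℝ be continuous on [0,ρ̄] and continuously differentiable on (0,ρ̄), with h(ρ) ≥ h₀ > 0 for all ρ and h′(ρ) ≥ 0 on (0,ρ̄). Then for all a, b ∈ [0,ρ̄] and all θ ≥ 0, the pressure p(ρ,θ) = ρ θ h(ρ) satisfies the monotonicity estimate (p(a,θ) − p(b,θ))(a − b) = θ (a h(a) − b h(b))(a − b) ≥ (h₀/(2ρ̄)) θ |a − b|³. -/

import Mathlib

open Set

lemma pressure_key
    (ρbar h₀ : ℝ) (hρbar : 0 < ρbar) (hh₀ : 0 < h₀)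
    (h h' : ℝ → ℝ)
    (hcont : ContinuousOn h (Icc 0 ρbar))
    (hderiv : ∀ x ∈ Ioo 0 ρbar, HasDerivAt h (h' x) x)
    (hlow : ∀ ρ ∈ Icc 0 ρbar, h₀ ≤ h ρ)
    (hmono : ∀ x ∈ Ioo 0 ρbar, 0 ≤ h' x) :
    ∀ a ∈ Icc 0 ρbar, ∀ b ∈ Icc 0 ρbar, b ≤ a →
      (h₀ / (2 * ρbar)) * (a - b) ^ 2 ≤ a * h a - b * h b := by
  set c := h₀ / (2 * ρbar) with hc
  have hcpos : 0 < c := div_pos hh₀ (by linarith)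
  set g : ℝ → ℝ := fun x => x * h x - c * x ^ 2 with hg
  have hgd : ∀ x ∈ Ioo 0 ρbar, HasDerivAt g (h x + x * h' x - 2 * c * x) x := by
    intro x hx
    have h1 : HasDerivAt (fun x => x * h x) (1 * h x + x * h' x) x :=
      (hasDerivAt_id x).mul (hderiv x hx)
    have h2 : HasDerivAt (fun x => c * x ^ 2) (c * (2 * x ^ 1)) x :=
      (hasDerivAt_pow 2 x).const_mul c
    have := h1.sub h2
    exact this.congr_deriv (by ring)
  have hmonoG : MonotoneOn g (Icc 0 ρbar) := by
    have hCont : ContinuousOn g (Icc 0 ρbar) :=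
      (continuousOn_id.mul hcont).sub
        ((continuousOn_const.mul (continuous_pow 2).continuousOn))
    have hint : interior (Icc (0:ℝ) ρbar) = Ioo 0 ρbar := interior_Icc
    apply monotoneOn_of_deriv_nonneg (convex_Icc 0 ρbar) hCont
    · rw [hint]
      intro x hx
      exact (hgd x hx).differentiableAt.differentiableWithinAt
    · rw [hint]
      intro x hx
      rw [(hgd x hx).deriv]
      have h1 : h₀ ≤ h x := hlow x ⟨le_of_lt hx.1, le_of_lt hx.2⟩
      have h2 : 0 ≤ x * h' x := mul_nonneg (le_of_lt hx.1) (hmono x hx)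
      have h3 : 2 * c * x ≤ h₀ := by
        have hce : c * (2 * ρbar) = h₀ := div_mul_cancel₀ _ (by positivity)
        nlinarith [hx.2.le, hx.1.le]
      linarith
  intro a ha b hb hba
  have hgab : g b ≤ g a := hmonoG hb ha hba
  have h1 : c * (a ^ 2 - b ^ 2) ≤ a * h a - b * h b := by
    simp only [hg] at hgab; linarith
  have h2 : c * (a - b) ^ 2 ≤ c * (a ^ 2 - b ^ 2) := by
    nlinarith [mul_nonneg (mul_nonneg hcpos.le hb.1) (sub_nonneg.mpr hba)]
  linarith

/-- Quantitative monotonicity of the pressure `p(ρ,θ) = ρ θ h(ρ)`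
in the density variable. -/
theorem pressure_monotonicity
    (ρbar h₀ : ℝ) (hρbar : 0 < ρbar) (hh₀ : 0 < h₀)
    (h h' : ℝ → ℝ)
    (hcont : ContinuousOn h (Icc 0 ρbar))
    (hderiv : ∀ x ∈ Ioo 0 ρbar, HasDerivAt h (h' x) x)
    (hderivcont : ContinuousOn h' (Ioo 0 ρbar))
    (hlow : ∀ ρ ∈ Icc 0 ρbar, h₀ ≤ h ρ)
    (hmono : ∀ x ∈ Ioo 0 ρbar, 0 ≤ h' x) :
    ∀ a ∈ Icc 0 ρbar, ∀ b ∈ Icc 0 ρbar, ∀ θ : ℝ, 0 ≤ θ →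
      (a * θ * h a - b * θ * h b) * (a - b) = θ * (a * h a - b * h b) * (a - b) ∧
      θ * (a * h a - b * h b) * (a - b) ≥ (h₀ / (2 * ρbar)) * θ * |a - b| ^ 3 := by
  have key := pressure_key ρbar h₀ hρbar hh₀ h h' hcont hderiv hlow hmono
  intro a ha b hb θ hθ
  refine ⟨by ring, ?_⟩
  have main : (h₀ / (2 * ρbar)) * |a - b| ^ 3 ≤ (a * h a - b * h b) * (a - b) := by
    rcases le_total b a with hba | hab
    · have := key a ha b hb hba
      rw [abs_of_nonneg (by linarith : (0:ℝ) ≤ a - b)]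
      nlinarith [sub_nonneg.mpr hba]
    · have := key b hb a ha hab
      rw [abs_of_nonpos (by linarith : a - b ≤ 0)]
      nlinarith [sub_nonneg.mpr hab]
  calc (h₀ / (2 * ρbar)) * θ * |a - b| ^ 3
      = θ * ((h₀ / (2 * ρbar)) * |a - b| ^ 3) := by ring
    _ ≤ θ * ((a * h a - b * h b) * (a - b)) := by
        exact mul_le_mul_of_nonneg_left main hθ
    _ = θ * (a * h a - b * h b) * (a - b) := by ring
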